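/- arXiv:1401.7860 — 2 statements merged into one kernel-verified Lean document; each statement's English description precedes it below -/
import Mathlib

section
/- Suppose L is generic, satisfies the triangle inequality, and s₂ + s₃ < (l_1 + … + l_n)/2. Then any two vertices of Γ(L) are joined by a path in Γ(L) of length at most 13; in particular, Γ(L) is connected. -/
open Finset

/-- `I ⊆ [n]` is *short*: the sum of its lengths is less than that of its complement. -/
def ShortSet {n : ℕ} (L : Fin n → ℝ) (I : Finset (Fin n)) : Prop :=
  ∑ i ∈ I, L i < ∑ i ∈ Iᶜ, L i

/-- `I ⊆ [n]` is *long*: the sum of its lengths is greater than that of its complement. -/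
def LongSet {n : ℕ} (L : Fin n → ℝ) (I : Finset (Fin n)) : Prop :=
  ∑ i ∈ Iᶜ, L i < ∑ i ∈ I, L i

/-- The length vector `L` is *generic*. -/
def GenericVec {n : ℕ} (L : Fin n → ℝ) : Prop :=
  ∀ I : Finset (Fin n), ∑ i ∈ I, L i ≠ ∑ i ∈ Iᶜ, L i

/-- `L` satisfies the triangle inequality: every singleton is short. -/
def TriangleIneq {n : ℕ} (L : Fin n → ℝ) : Prop :=
  ∀ i : Fin n, ShortSet L {i}

/-- Ordered triples of subsets of `[n]`. -/
abbrev LTriple (n : ℕ) := Finset (Fin n) × Finset (Fin n) × Finset (Fin n)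

/-- An ordered triple `(I, J, K)` representing a vertex of `Γ(L)`: three pairwise
disjoint nonempty short sets whose union is `[n]`. -/
def IsVertex {n : ℕ} (L : Fin n → ℝ) (V : LTriple n) : Prop :=
  V.1.Nonempty ∧ V.2.1.Nonempty ∧ V.2.2.Nonempty ∧
  ShortSet L V.1 ∧ ShortSet L V.2.1 ∧ ShortSet L V.2.2 ∧
  Disjoint V.1 V.2.1 ∧ Disjoint V.1 V.2.2 ∧ Disjoint V.2.1 V.2.2 ∧
  V.1 ∪ V.2.1 ∪ V.2.2 = Finset.univ

/-- Cyclic rotation of an ordered triple. -/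
def rotT {n : ℕ} (V : LTriple n) : LTriple n := (V.2.1, V.2.2, V.1)

/-- Two ordered triples represent the same cyclically ordered partition
(`(I,J,K)`, `(J,K,I)` and `(K,I,J)` are identified). -/
def CyclEq {n : ℕ} (V W : LTriple n) : Prop :=
  W = V ∨ W = rotT V ∨ W = rotT (rotT V)

/-- The mirror image of the vertex `(I, J, K)` is the vertex `(J, I, K)`. -/
def mirrorT {n : ℕ} (V : LTriple n) : LTriple n := (V.2.1, V.1, V.2.2)

/-- The elementary move on representatives: shift a nonempty proper subset
`S ⊊ I` to the second part, provided `J ∪ S` stays short. -/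
def MoveStep {n : ℕ} (L : Fin n → ℝ) (V W : LTriple n) : Prop :=
  ∃ S : Finset (Fin n), S.Nonempty ∧ S ⊂ V.1 ∧ ShortSet L (V.2.1 ∪ S) ∧
    W = (V.1 \ S, V.2.1 ∪ S, V.2.2)

/-- Adjacency in `Γ(L)`: one of the two vertices has a representative from which an
elementary move leads to a representative of the other. -/
def GammaAdj {n : ℕ} (L : Fin n → ℝ) (V W : LTriple n) : Prop :=
  (∃ V' W' : LTriple n, CyclEq V V' ∧ MoveStep L V' W' ∧ CyclEq W W') ∨
  (∃ W' V' : LTriple n, CyclEq W W' ∧ MoveStep L W' V' ∧ CyclEq V V')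

/-- There is a path of length `m` (i.e. with `m` consecutive edges) in `Γ(L)`
from the vertex `V` to the vertex `W`. -/
def GammaPath {n : ℕ} (L : Fin n → ℝ) (m : ℕ) (V W : LTriple n) : Prop :=
  ∃ f : ℕ → LTriple n, CyclEq V (f 0) ∧ CyclEq W (f m) ∧
    (∀ i ≤ m, IsVertex L (f i)) ∧ ∀ i < m, GammaAdj L (f i) (f (i + 1))

/-- The list of lengths sorted in nonincreasing order. -/
noncomputable def sortedDesc {n : ℕ} (L : Fin n → ℝ) : List ℝ :=
  List.insertionSort (· ≥ ·) (List.ofFn L)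

/-- The second largest length (with multiplicity). -/
noncomputable def s2 {n : ℕ} (L : Fin n → ℝ) : ℝ := (sortedDesc L).getD 1 0

/-- The third largest length (with multiplicity). -/
noncomputable def s3 {n : ℕ} (L : Fin n → ℝ) : ℝ := (sortedDesc L).getD 2 0

namespace NavProof

open Finset

variable {n : ℕ} {L : Fin n → ℝ}

/-! ### Sum basics -/

lemma sum_compl_eq (S : Finset (Fin n)) :
    ∑ i ∈ Sᶜ, L i = (∑ i, L i) - ∑ i ∈ S, L i := by
  have h := Finset.sum_add_sum_compl S L
  linarith

lemma short_iff {S : Finset (Fin n)} :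
    ShortSet L S ↔ 2 * ∑ i ∈ S, L i < ∑ i, L i := by
  unfold ShortSet
  rw [sum_compl_eq]
  constructor <;> intro h <;> linarith

lemma sum_mono (hpos : ∀ i, 0 < L i) {S T : Finset (Fin n)} (h : S ⊆ T) :
    ∑ i ∈ S, L i ≤ ∑ i ∈ T, L i :=
  Finset.sum_le_sum_of_subset_of_nonneg h (fun i _ _ => (hpos i).le)

lemma short_mono (hpos : ∀ i, 0 < L i) {S T : Finset (Fin n)} (h : S ⊆ T)
    (hT : ShortSet L T) : ShortSet L S := by
  rw [short_iff] at *
  have := sum_mono hpos h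
  linarith

lemma gen2 (hgen : GenericVec L) (S : Finset (Fin n)) :
    2 * ∑ i ∈ S, L i ≠ ∑ i, L i := by
  intro h
  apply hgen S
  rw [sum_compl_eq]
  linarith

/-! ### Cyclic equivalence -/

lemma rot3 (V : LTriple n) : rotT (rotT (rotT V)) = V := rfl

lemma cyclEq_refl (V : LTriple n) : CyclEq V V := Or.inl rfl

lemma cyclEq_rot (V : LTriple n) : CyclEq V (rotT V) := Or.inr (Or.inl rfl)

lemma cyclEq_rot2 (V : LTriple n) : CyclEq V (rotT (rotT V)) := Or.inr (Or.inr rfl)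

lemma cyclEq_symm {V W : LTriple n} (h : CyclEq V W) : CyclEq W V := by
  rcases h with rfl | rfl | rfl
  · exact Or.inl rfl
  · exact Or.inr (Or.inr (rot3 V).symm)
  · exact Or.inr (Or.inl (rot3 V).symm)

lemma cyclEq_trans {U V W : LTriple n} (h1 : CyclEq U V) (h2 : CyclEq V W) : CyclEq U W := by
  rcases h1 with rfl | rfl | rfl <;> rcases h2 with rfl | rfl | rfl <;>
    first
      | exact cyclEq_refl _
      | exact cyclEq_rot _
      | exact cyclEq_rot2 _
      | (rw [rot3]; first | exact cyclEq_refl _ | exact cyclEq_rot _ | exact cyclEq_rot2 _)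

lemma isVertex_rot {V : LTriple n} (h : IsVertex L V) : IsVertex L (rotT V) := by
  obtain ⟨h1, h2, h3, s1, s2, s3, d12, d13, d23, hu⟩ := h
  refine ⟨h2, h3, h1, s2, s3, s1, d23, d12.symm, d13.symm, ?_⟩
  rw [← hu]
  ext x
  simp only [Finset.mem_union]
  tauto

lemma isVertex_cyclEq {V W : LTriple n} (h : CyclEq V W) (hV : IsVertex L V) :
    IsVertex L W := by
  rcases h with rfl | rfl | rfl
  exacts [hV, isVertex_rot hV, isVertex_rot (isVertex_rot hV)]

/-! ### Adjacency -/

lemma gammaAdj_symm {V W : LTriple n} (h : GammaAdj L V W) : GammaAdj L W V :=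
  h.elim Or.inr Or.inl

lemma gammaAdj_congr {V V' W W' : LTriple n} (hV : CyclEq V V') (hW : CyclEq W W')
    (h : GammaAdj L V W) : GammaAdj L V' W' := by
  rcases h with ⟨X, Y, hx, m, hy⟩ | ⟨X, Y, hx, m, hy⟩
  · exact Or.inl ⟨X, Y, cyclEq_trans (cyclEq_symm hV) hx, m, cyclEq_trans (cyclEq_symm hW) hy⟩
  · exact Or.inr ⟨X, Y, cyclEq_trans (cyclEq_symm hW) hx, m, cyclEq_trans (cyclEq_symm hV) hy⟩

/-! ### Paths and reachability -/

lemma gammaPath_zero {V : LTriple n} (h : IsVertex L V) : GammaPath L 0 V V :=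
  ⟨fun _ => V, cyclEq_refl _, cyclEq_refl _, fun _ _ => h, fun i hi => absurd hi (Nat.not_lt_zero i)⟩

lemma gammaPath_one {V W : LTriple n} (hadj : GammaAdj L V W) (hV : IsVertex L V)
    (hW : IsVertex L W) : GammaPath L 1 V W := by
  refine ⟨fun i => if i = 0 then V else W, by simp [cyclEq_refl], by simp [cyclEq_refl], ?_, ?_⟩
  · intro i _
    by_cases h : i = 0 <;> simp [h, hV, hW]
  · intro i hi
    have : i = 0 := by omega
    subst this
    simpa using hadj

lemma gammaPath_concat {m1 m2 : ℕ} {V X W : LTriple n}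
    (h1 : GammaPath L m1 V X) (h2 : GammaPath L m2 X W) :
    GammaPath L (m1 + m2) V W := by
  obtain ⟨f, hf0, hfm, hfv, hfa⟩ := h1
  obtain ⟨g, hg0, hgm, hgv, hga⟩ := h2
  have hXf : CyclEq (f m1) (g 0) := cyclEq_trans (cyclEq_symm hfm) hg0
  refine ⟨fun i => if i < m1 then f i else g (i - m1), ?_, ?_, ?_, ?_⟩
  · by_cases h : 0 < m1
    · simpa [if_pos h] using hf0
    · have hm : m1 = 0 := by omega
      subst hm
      simpa using cyclEq_trans hf0 hXf
  · have h : ¬ (m1 + m2 < m1) := by omega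
    have e : m1 + m2 - m1 = m2 := by omega
    simpa [if_neg h, e] using hgm
  · intro i hi
    by_cases h : i < m1
    · simpa [if_pos h] using hfv i h.le
    · simpa [if_neg h] using hgv (i - m1) (by omega)
  · intro i hi
    by_cases h : i + 1 < m1
    · have h' : i < m1 := by omega
      simpa [if_pos h, if_pos h'] using hfa i h'
    · by_cases h' : i < m1
      · have e : i + 1 = m1 := by omega
        have e2 : i + 1 - m1 = 0 := by omega
        simp only [if_neg h, if_pos h', e2]
        have hadj := hfa i h'
        rw [e] at hadj
        exact gammaAdj_congr (cyclEq_refl _) hXf hadj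
      · have e1 : i + 1 - m1 = (i - m1) + 1 := by omega
        simp only [if_neg h, if_neg h', e1]
        exact hga (i - m1) (by omega)

lemma gammaPath_symm {m : ℕ} {V W : LTriple n} (h : GammaPath L m V W) :
    GammaPath L m W V := by
  obtain ⟨f, hf0, hfm, hfv, hfa⟩ := h
  refine ⟨fun i => f (m - i), by simpa using hfm, by simpa using hf0,
    fun i _ => hfv (m - i) (by omega), ?_⟩
  intro i hi
  show GammaAdj L (f (m - i)) (f (m - (i + 1)))
  have e : m - i = (m - (i + 1)) + 1 := by omega
  rw [e]
  exact gammaAdj_symm (hfa (m - (i + 1)) (by omega))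

def Reach (L : Fin n → ℝ) (k : ℕ) (V W : LTriple n) : Prop :=
  ∃ m ≤ k, GammaPath L m V W

lemma Reach.trans {k1 k2 : ℕ} {V X W : LTriple n} (h1 : Reach L k1 V X)
    (h2 : Reach L k2 X W) : Reach L (k1 + k2) V W := by
  obtain ⟨m1, hm1, p1⟩ := h1
  obtain ⟨m2, hm2, p2⟩ := h2
  exact ⟨m1 + m2, Nat.add_le_add hm1 hm2, gammaPath_concat p1 p2⟩

lemma Reach.symm {k : ℕ} {V W : LTriple n} (h : Reach L k V W) : Reach L k W V := by
  obtain ⟨m, hm, p⟩ := h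
  exact ⟨m, hm, gammaPath_symm p⟩

lemma reach_zero {V : LTriple n} (h : IsVertex L V) : Reach L 0 V V :=
  ⟨0, le_refl _, gammaPath_zero h⟩

lemma Reach.le {k k' : ℕ} {V W : LTriple n} (h : Reach L k V W) (hk : k ≤ k') :
    Reach L k' V W := by
  obtain ⟨m, hm, p⟩ := h
  exact ⟨m, hm.trans hk, p⟩

lemma reach_one {V W : LTriple n} (hadj : GammaAdj L V W) (hV : IsVertex L V)
    (hW : IsVertex L W) : Reach L 1 V W :=
  ⟨1, le_refl _, gammaPath_one hadj hV hW⟩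

lemma reach_congr {k : ℕ} {V V' W W' : LTriple n} (hV : CyclEq V V') (hW : CyclEq W W')
    (h : Reach L k V W) : Reach L k V' W' := by
  obtain ⟨m, hm, f, hf0, hfm, hfv, hfa⟩ := h
  exact ⟨m, hm, f, cyclEq_trans (cyclEq_symm hV) hf0, cyclEq_trans (cyclEq_symm hW) hfm, hfv, hfa⟩

/-! ### Elementary moves -/

lemma cyclEq_mk_rot (A B C : Finset (Fin n)) :
    CyclEq (A, B, C) (B, C, A) := Or.inr (Or.inl rfl)

lemma cyclEq_mk_rot2 (A B C : Finset (Fin n)) :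
    CyclEq (A, B, C) (C, A, B) := Or.inr (Or.inr rfl)

lemma gammaAdj_move {A B C S : Finset (Fin n)} (hS : S.Nonempty) (hsub : S ⊆ A)
    (hrem : (A \ S).Nonempty) (hshort : ShortSet L (B ∪ S)) :
    GammaAdj L (A, B, C) (A \ S, B ∪ S, C) := by
  obtain ⟨x, hx⟩ := hrem
  rw [Finset.mem_sdiff] at hx
  refine Or.inl ⟨(A, B, C), (A \ S, B ∪ S, C), cyclEq_refl _, ⟨S, hS, ?_, hshort, rfl⟩,
    cyclEq_refl _⟩
  refine (Finset.ssubset_iff_subset_ne).2 ⟨hsub, fun h => ?_⟩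
  exact hx.2 (h ▸ hx.1)

lemma isVertex_move12 (hpos : ∀ i, 0 < L i) {A B C S : Finset (Fin n)}
    (hV : IsVertex L (A, B, C)) (hsub : S ⊆ A) (hrem : (A \ S).Nonempty)
    (hshort : ShortSet L (B ∪ S)) : IsVertex L (A \ S, B ∪ S, C) := by
  obtain ⟨h1, h2, h3, s1, s2, s3, d12, d13, d23, hu⟩ := hV
  refine ⟨hrem, h2.mono Finset.subset_union_left, h3,
    short_mono hpos Finset.sdiff_subset s1, hshort, s3,
    Finset.disjoint_union_right.2 ⟨d12.mono_left Finset.sdiff_subset, Finset.sdiff_disjoint⟩,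
    d13.mono_left Finset.sdiff_subset,
    Finset.disjoint_union_left.2 ⟨d23, d13.mono_left hsub⟩, ?_⟩
  rw [← hu]
  rw [Finset.union_comm B S, ← Finset.union_assoc, Finset.sdiff_union_self_eq_union,
    Finset.union_eq_left.mpr hsub]

lemma reach_move12 (hpos : ∀ i, 0 < L i) {A B C S : Finset (Fin n)}
    (hV : IsVertex L (A, B, C)) (hsub : S ⊆ A) (hrem : (A \ S).Nonempty)
    (hshort : ShortSet L (B ∪ S)) :
    Reach L 1 (A, B, C) (A \ S, B ∪ S, C) ∧ IsVertex L (A \ S, B ∪ S, C) := by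
  have hvert := isVertex_move12 hpos hV hsub hrem hshort
  refine ⟨?_, hvert⟩
  rcases S.eq_empty_or_nonempty with rfl | hS
  · rw [Finset.sdiff_empty, Finset.union_empty]
    rw [Finset.sdiff_empty, Finset.union_empty] at hvert
    exact (reach_zero hV).le (by omega)
  · exact reach_one (gammaAdj_move hS hsub hrem hshort) hV hvert

lemma reach_move21 (hpos : ∀ i, 0 < L i) {A B C S : Finset (Fin n)}
    (hV : IsVertex L (A, B, C)) (hsub : S ⊆ B) (hrem : (B \ S).Nonempty)
    (hshort : ShortSet L (A ∪ S)) :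
    Reach L 1 (A, B, C) (A ∪ S, B \ S, C) ∧ IsVertex L (A ∪ S, B \ S, C) := by
  obtain ⟨h1, h2, h3, s1, s2, s3, d12, d13, d23, hu⟩ := hV
  have hAS : Disjoint A S := d12.mono_right hsub
  have hvert : IsVertex L (A ∪ S, B \ S, C) := by
    refine ⟨h1.mono Finset.subset_union_left, hrem, h3, hshort,
      short_mono hpos Finset.sdiff_subset s2, s3,
      ?_, Finset.disjoint_union_left.2 ⟨d13, d23.mono_left hsub⟩,
      d23.mono_left Finset.sdiff_subset, ?_⟩
    · refine Finset.disjoint_union_left.2 ⟨d12.mono_right Finset.sdiff_subset, ?_⟩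
      exact Finset.sdiff_disjoint.symm
    · rw [← hu]
      rw [Finset.union_assoc A S, Finset.union_comm S (B \ S),
        Finset.sdiff_union_of_subset hsub]
  refine ⟨?_, hvert⟩
  rcases S.eq_empty_or_nonempty with rfl | hS
  · rw [Finset.sdiff_empty, Finset.union_empty]
    exact (reach_zero ⟨h1, h2, h3, s1, s2, s3, d12, d13, d23, hu⟩).le (by omega)
  · have e1 : (A ∪ S) \ S = A := by
      ext x
      simp only [Finset.mem_sdiff, Finset.mem_union]
      constructor
      · tauto
      · intro hx
        exact ⟨Or.inl hx, fun hxs => (Finset.disjoint_left.1 hAS) hx hxs⟩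
    have e2 : (B \ S) ∪ S = B := Finset.sdiff_union_of_subset hsub
    have hadj : GammaAdj L (A ∪ S, B \ S, C) ((A ∪ S) \ S, (B \ S) ∪ S, C) := by
      apply gammaAdj_move hS Finset.subset_union_right _ (by rw [e2]; exact s2)
      rw [e1]; exact h1
    rw [e1, e2] at hadj
    exact reach_one (gammaAdj_symm hadj) ⟨h1, h2, h3, s1, s2, s3, d12, d13, d23, hu⟩ hvert

/-- move between slots 2 and 3 (from 2 to 3). -/
lemma reach_move23 (hpos : ∀ i, 0 < L i) {A B C S : Finset (Fin n)}
    (hV : IsVertex L (A, B, C)) (hsub : S ⊆ B) (hrem : (B \ S).Nonempty)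
    (hshort : ShortSet L (C ∪ S)) :
    Reach L 1 (A, B, C) (A, B \ S, C ∪ S) ∧ IsVertex L (A, B \ S, C ∪ S) := by
  have hrot : IsVertex L (B, C, A) := isVertex_rot hV
  obtain ⟨hr, hv⟩ := reach_move12 hpos hrot hsub hrem hshort
  have hv' : IsVertex L (A, B \ S, C ∪ S) :=
    isVertex_cyclEq (cyclEq_mk_rot2 _ _ _) hv
  refine ⟨?_, hv'⟩
  exact reach_congr (cyclEq_mk_rot2 _ _ _) (cyclEq_mk_rot2 _ _ _) hr

lemma reach_move32 (hpos : ∀ i, 0 < L i) {A B C S : Finset (Fin n)}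
    (hV : IsVertex L (A, B, C)) (hsub : S ⊆ C) (hrem : (C \ S).Nonempty)
    (hshort : ShortSet L (B ∪ S)) :
    Reach L 1 (A, B, C) (A, B ∪ S, C \ S) ∧ IsVertex L (A, B ∪ S, C \ S) := by
  have hrot : IsVertex L (B, C, A) := isVertex_rot hV
  obtain ⟨hr, hv⟩ := reach_move21 hpos hrot hsub hrem hshort
  have hv' : IsVertex L (A, B ∪ S, C \ S) := isVertex_cyclEq (cyclEq_mk_rot2 _ _ _) hv
  refine ⟨?_, hv'⟩
  exact reach_congr (cyclEq_mk_rot2 _ _ _) (cyclEq_mk_rot2 _ _ _) hr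

lemma reach_move13 (hpos : ∀ i, 0 < L i) {A B C S : Finset (Fin n)}
    (hV : IsVertex L (A, B, C)) (hsub : S ⊆ A) (hrem : (A \ S).Nonempty)
    (hshort : ShortSet L (C ∪ S)) :
    Reach L 1 (A, B, C) (A \ S, B, C ∪ S) ∧ IsVertex L (A \ S, B, C ∪ S) := by
  have hrot : IsVertex L (C, A, B) := isVertex_rot (isVertex_rot hV)
  obtain ⟨hr, hv⟩ := reach_move21 hpos hrot hsub hrem hshort
  have hv' : IsVertex L (A \ S, B, C ∪ S) := isVertex_cyclEq (cyclEq_mk_rot _ _ _) hv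
  refine ⟨?_, hv'⟩
  exact reach_congr (cyclEq_mk_rot _ _ _) (cyclEq_mk_rot _ _ _) hr

lemma reach_move31 (hpos : ∀ i, 0 < L i) {A B C S : Finset (Fin n)}
    (hV : IsVertex L (A, B, C)) (hsub : S ⊆ C) (hrem : (C \ S).Nonempty)
    (hshort : ShortSet L (A ∪ S)) :
    Reach L 1 (A, B, C) (A ∪ S, B, C \ S) ∧ IsVertex L (A ∪ S, B, C \ S) := by
  have hrot : IsVertex L (C, A, B) := isVertex_rot (isVertex_rot hV)
  obtain ⟨hr, hv⟩ := reach_move12 hpos hrot hsub hrem hshort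
  have hv' : IsVertex L (A ∪ S, B, C \ S) := isVertex_cyclEq (cyclEq_mk_rot _ _ _) hv
  refine ⟨?_, hv'⟩
  exact reach_congr (cyclEq_mk_rot _ _ _) (cyclEq_mk_rot _ _ _) hr
/-! ### The splitting lemma (Lemma G) -/

lemma lemmaG (hpos : ∀ i, 0 < L i) (hgen : GenericVec L) (M : ℝ)
    (U : Finset (Fin n)) :
    ∀ A B : Finset (Fin n), Disjoint U A → Disjoint U B →
    (∀ e ∈ U, L e ≤ M) →
    (∑ i ∈ A, L i + ∑ i ∈ B, L i + ∑ i ∈ U, L i + M ≤ ∑ i, L i) →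
    2 * ∑ i ∈ A, L i < ∑ i, L i → 2 * ∑ i ∈ B, L i < ∑ i, L i →
    ∃ S ⊆ U, 2 * ∑ i ∈ A ∪ S, L i < ∑ i, L i ∧
      2 * ∑ i ∈ B ∪ (U \ S), L i < ∑ i, L i := by
  induction U using Finset.cons_induction with
  | empty =>
    intro A B _ _ _ _ hA hB
    exact ⟨∅, Finset.Subset.refl _, by simpa using hA, by simpa using hB⟩
  | cons e U' he ih =>
    intro A B hUA hUB hM hsum hA hB
    have heA : e ∉ A := Finset.disjoint_left.1 hUA (Finset.mem_cons_self e U')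
    have heB : e ∉ B := Finset.disjoint_left.1 hUB (Finset.mem_cons_self e U')
    have hU'A : Disjoint U' A := hUA.mono_left (Finset.subset_cons _)
    have hU'B : Disjoint U' B := hUB.mono_left (Finset.subset_cons _)
    have hM' : ∀ x ∈ U', L x ≤ M := fun x hx => hM x (Finset.mem_cons_of_mem hx)
    have heM : L e ≤ M := hM e (Finset.mem_cons_self e U')
    have hsum_cons : ∑ i ∈ Finset.cons e U' he, L i = L e + ∑ i ∈ U', L i :=
      Finset.sum_cons he
    have hU'nonneg : 0 ≤ ∑ i ∈ U', L i := Finset.sum_nonneg fun i _ => (hpos i).le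
    by_cases hcase : 2 * (∑ i ∈ A, L i + L e) < ∑ i, L i
    · -- put e on the A side
      have hsumA : ∑ i ∈ insert e A, L i = L e + ∑ i ∈ A, L i := Finset.sum_insert heA
      obtain ⟨S', hS'U, h1, h2⟩ := ih (insert e A) B
        (Finset.disjoint_left.2 fun x hx hmem => by
          rcases Finset.mem_insert.1 hmem with rfl | hxa
          · exact he hx
          · exact Finset.disjoint_left.1 hU'A hx hxa)
        hU'B hM' (by rw [hsumA]; rw [hsum_cons] at hsum; linarith)
        (by rw [hsumA]; linarith) hB
      refine ⟨insert e S', ?_, ?_, ?_⟩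
      · intro x hx
        rcases Finset.mem_insert.1 hx with rfl | hxs
        · exact Finset.mem_cons_self _ _
        · exact Finset.mem_cons_of_mem (hS'U hxs)
      · have : A ∪ insert e S' = insert e A ∪ S' := by
          ext x
          simp only [Finset.mem_union, Finset.mem_insert]
          tauto
        rwa [this]
      · have : Finset.cons e U' he \ insert e S' = U' \ S' := by
          ext x
          simp only [Finset.mem_sdiff, Finset.mem_cons, Finset.mem_insert]
          constructor
          · rintro ⟨rfl | hx, h2⟩
            · exact absurd (Or.inl rfl) h2
            · exact ⟨hx, fun hxs => h2 (Or.inr hxs)⟩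
          · rintro ⟨hx, hxs⟩
            exact ⟨Or.inr hx, fun h => by
              rcases h with rfl | h
              · exact he hx
              · exact hxs h⟩
        rwa [this]
    · -- put e on the B side
      push_neg at hcase
      have hne : 2 * (∑ i ∈ B, L i + L e) ≠ ∑ i, L i := by
        have := gen2 hgen (insert e B)
        rwa [Finset.sum_insert heB, add_comm (L e)] at this
      have hlt : 2 * (∑ i ∈ B, L i + L e) < ∑ i, L i := by
        refine lt_of_le_of_ne ?_ hne
        rw [hsum_cons] at hsum
        linarith
      have hsumB : ∑ i ∈ insert e B, L i = L e + ∑ i ∈ B, L i := Finset.sum_insert heB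
      obtain ⟨S', hS'U, h1, h2⟩ := ih A (insert e B) hU'A
        (Finset.disjoint_left.2 fun x hx hmem => by
          rcases Finset.mem_insert.1 hmem with rfl | hxb
          · exact he hx
          · exact Finset.disjoint_left.1 hU'B hx hxb)
        hM' (by rw [hsumB]; rw [hsum_cons] at hsum; linarith)
        hA (by rw [hsumB]; linarith)
      refine ⟨S', fun x hx => Finset.mem_cons_of_mem (hS'U hx), h1, ?_⟩
      have : Finset.cons e U' he \ S' = insert e (U' \ S') := by
        ext x
        simp only [Finset.mem_sdiff, Finset.mem_cons, Finset.mem_insert]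
        constructor
        · rintro ⟨rfl | hx, h2⟩
          · exact Or.inl rfl
          · exact Or.inr ⟨hx, h2⟩
        · rintro (rfl | ⟨hx, hxs⟩)
          · exact ⟨Or.inl rfl, fun h => he (hS'U h)⟩
          · exact ⟨Or.inr hx, hxs⟩
      rw [this]
      have hxUS : e ∉ U' \ S' := fun h => he (Finset.mem_sdiff.1 h).1
      have : B ∪ insert e (U' \ S') = insert e B ∪ (U' \ S') := by
        ext x
        simp only [Finset.mem_union, Finset.mem_insert]
        tauto
      rwa [this]
/-! ### Sorting facts: bounding pairs by `s₂ + s₃` -/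

lemma countP_sorted_le (v : ℝ) :
    ∀ (l : List ℝ), l.Pairwise (· ≥ ·) → ∀ (k : ℕ) (hk : k < l.length),
      l.get ⟨k, hk⟩ < v → l.countP (fun t => decide (v ≤ t)) ≤ k := by
  intro l
  induction l with
  | nil => intro _ k hk; simp at hk
  | cons c tl ih =>
    intro hl k hk hlt
    cases k with
    | zero =>
      have hc : ¬ (v ≤ c) := not_le.2 (by simpa using hlt)
      have hzero : tl.countP (fun t => decide (v ≤ t)) = 0 := by
        rw [List.countP_eq_zero]
        intro t ht
        have h1 : c ≥ t := List.rel_of_pairwise_cons hl ht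
        simp only [decide_eq_true_eq]
        intro hv
        exact hc (hv.trans h1)
      rw [List.countP_cons, hzero]
      simp [hc]
    | succ k =>
      have h1 : tl.countP (fun t => decide (v ≤ t)) ≤ k := by
        apply ih hl.of_cons k (by simpa using Nat.succ_lt_succ_iff.1 hk)
        simpa using hlt
      calc (c :: tl).countP (fun t => decide (v ≤ t))
          ≤ tl.countP (fun t => decide (v ≤ t)) + 1 := by
            rw [List.countP_cons]
            split <;> omega
        _ ≤ k + 1 := by omega

lemma card_le_countP (v : ℝ) (Q : Finset (Fin n)) (hQ : ∀ i ∈ Q, v ≤ L i) :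
    Q.card ≤ (List.ofFn L).countP (fun t => decide (v ≤ t)) := by
  rw [List.ofFn_eq_map, List.countP_map]
  rw [List.countP_eq_length_filter]
  have hnd : ((List.finRange n).filter
      ((fun t => decide (v ≤ t)) ∘ L)).Nodup :=
    (List.nodup_finRange n).filter _
  have hto : ((List.finRange n).filter ((fun t => decide (v ≤ t)) ∘ L)).toFinset
      = Finset.univ.filter (fun i => v ≤ L i) := by
    ext i
    simp [List.mem_filter, List.mem_finRange]
  calc Q.card ≤ (Finset.univ.filter (fun i => v ≤ L i)).card := by
        apply Finset.card_le_card
        intro i hi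
        exact Finset.mem_filter.2 ⟨Finset.mem_univ _, hQ i hi⟩
    _ = ((List.finRange n).filter ((fun t => decide (v ≤ t)) ∘ L)).toFinset.card := by
        rw [hto]
    _ = _ := List.toFinset_card_of_nodup hnd

lemma le_sortedDesc (hn : 3 ≤ n) (v : ℝ) (k : ℕ) (hk : k < n) (Q : Finset (Fin n))
    (hQcard : k < Q.card) (hQ : ∀ i ∈ Q, v ≤ L i) :
    v ≤ (sortedDesc L).getD k 0 := by
  haveI ht : Std.Total (α := ℝ) (· ≥ ·) := ⟨fun a b => le_total b a⟩
  haveI htr : IsTrans ℝ (· ≥ ·) := ⟨fun a b c h1 h2 => le_trans h2 h1⟩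
  have hperm : List.Perm (sortedDesc L) (List.ofFn L) := List.perm_insertionSort _ _
  have hlen : (sortedDesc L).length = n := by
    rw [hperm.length_eq, List.length_ofFn]
  have hsort : (sortedDesc L).Pairwise (· ≥ ·) := List.pairwise_insertionSort _ _
  have hk' : k < (sortedDesc L).length := by omega
  rw [show (sortedDesc L).getD k 0 = (sortedDesc L).get ⟨k, hk'⟩ from List.getD_eq_get _ _ ⟨k, hk'⟩]
  by_contra hlt
  push_neg at hlt
  have h1 := countP_sorted_le v (sortedDesc L) hsort k hk' hlt
  rw [hperm.countP_eq] at h1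
  have h2 := card_le_countP v Q hQ
  omega

lemma pair_lt_half (hn : 3 ≤ n) (hs : s2 L + s3 L < (∑ i, L i) / 2)
    (a : Fin n) (ha : ∀ i, L i ≤ L a) :
    ∀ x y : Fin n, x ≠ y → x ≠ a → y ≠ a → 2 * (L x + L y) < ∑ i, L i := by
  have key : ∀ x y : Fin n, x ≠ y → x ≠ a → y ≠ a → L y ≤ L x →
      2 * (L x + L y) < ∑ i, L i := by
    intro x y hxy hxa hya hyx
    have h2 : L x ≤ s2 L := by
      apply le_sortedDesc hn (L x) 1 (by omega) {a, x}
      · rw [Finset.card_insert_of_notMem (by simpa using Ne.symm hxa)]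
        simp
      · intro i hi
        rcases Finset.mem_insert.1 hi with rfl | hi
        · exact ha x
        · rw [Finset.mem_singleton.1 hi]
    have h3 : L y ≤ s3 L := by
      apply le_sortedDesc hn (L y) 2 (by omega) {a, x, y}
      · have hax : a ∉ ({x, y} : Finset (Fin n)) := by
          simp only [Finset.mem_insert, Finset.mem_singleton]
          push_neg
          exact ⟨Ne.symm hxa, Ne.symm hya⟩
        have hxy' : x ∉ ({y} : Finset (Fin n)) := by simpa using hxy
        rw [Finset.card_insert_of_notMem hax, Finset.card_insert_of_notMem hxy']
        simp
      · intro i hi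
        rcases Finset.mem_insert.1 hi with rfl | hi
        · exact ha y
        · rcases Finset.mem_insert.1 hi with rfl | hi
          · exact hyx
          · rw [Finset.mem_singleton.1 hi]
    linarith
  intro x y hxy hxa hya
  rcases le_total (L y) (L x) with h | h
  · exact key x y hxy hxa hya h
  · have := key y x (Ne.symm hxy) hya hxa h
    linarith
/-! ### Normalization: every vertex reaches a normal form in ≤ 5 moves -/

lemma norm1 (hpos : ∀ i, 0 < L i) (hgen : GenericVec L)
    (a : Fin n) (ha : ∀ i, L i ≤ L a)
    (C : Finset (Fin n)) (haC : a ∈ C) (hCshort : ShortSet L C)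
    (hkey : ∀ q ∈ Cᶜ, ShortSet L (Cᶜ \ {q}))
    (I J K : Finset (Fin n)) (hV : IsVertex L (I, J, K)) (haI : a ∈ I) :
    ∃ q ∈ Cᶜ, Reach L 5 (I, J, K) (C, Cᶜ \ {q}, {q}) ∧
      IsVertex L (C, Cᶜ \ {q}, {q}) := by
  obtain ⟨hI, hJ, hK, sI, sJ, sK, dIJ, dIK, dJK, hu⟩ := hV
  have hV : IsVertex L (I, J, K) := ⟨hI, hJ, hK, sI, sJ, sK, dIJ, dIK, dJK, hu⟩
  set U := I.erase a with hU
  have hT : ∑ i, L i = ∑ i ∈ I, L i + ∑ i ∈ J, L i + ∑ i ∈ K, L i := by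
    rw [← hu, Finset.sum_union (Finset.disjoint_union_left.2 ⟨dIK, dJK⟩),
      Finset.sum_union dIJ]
  have hUI : ∑ i ∈ U, L i + L a = ∑ i ∈ I, L i := Finset.sum_erase_add I L haI
  have hUsubI : U ⊆ I := Finset.erase_subset _ _
  obtain ⟨S1, hS1U, hshort1, hshort2⟩ := lemmaG hpos hgen (L a) U J K
    (dIJ.mono_left hUsubI) (dIK.mono_left hUsubI) (fun e _ => ha e)
    (by linarith) (short_iff.1 sJ) (short_iff.1 sK)
  set S2 := U \ S1 with hS2def
  have haU : a ∉ U := Finset.notMem_erase a I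
  have haS1 : a ∉ S1 := fun h => haU (hS1U h)
  have haS2 : a ∉ S2 := fun h => haU (Finset.mem_sdiff.1 h).1
  have hS1I : S1 ⊆ I := hS1U.trans hUsubI
  have hS2I : S2 ⊆ I := (Finset.sdiff_subset).trans hUsubI
  -- move 1 : part of I to slot 2
  obtain ⟨r1, v1⟩ := reach_move12 hpos hV hS1I
    ⟨a, Finset.mem_sdiff.2 ⟨haI, haS1⟩⟩ (short_iff.2 hshort1)
  -- move 2 : rest of I (except a) to slot 3
  have hsub2 : S2 ⊆ I \ S1 := fun x hx => Finset.mem_sdiff.2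
    ⟨hS2I hx, (Finset.mem_sdiff.1 hx).2⟩
  obtain ⟨r2, v2⟩ := reach_move13 hpos v1 hsub2
    ⟨a, Finset.mem_sdiff.2 ⟨Finset.mem_sdiff.2 ⟨haI, haS1⟩, haS2⟩⟩
    (short_iff.2 hshort2)
  have hIa : (I \ S1) \ S2 = {a} := by
    ext x
    simp only [hS2def, hU, Finset.mem_sdiff, Finset.mem_erase, Finset.mem_singleton]
    constructor
    · rintro ⟨⟨hxI, hxS1⟩, h2⟩
      by_contra hne
      exact h2 ⟨⟨hne, hxI⟩, hxS1⟩
    · rintro rfl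
      exact ⟨⟨haI, haS1⟩, fun h => h.1.1 rfl⟩
  rw [hIa] at r2 v2
  set J1 := J ∪ S1 with hJ1def
  set K1 := K ∪ S2 with hK1def
  have v2' := v2
  obtain ⟨-, hJ1ne, hK1ne, sa, sJ1, sK1, d1, d2, d3, hu2⟩ := v2'
  have haJ1 : a ∉ J1 := Finset.disjoint_left.1 d1 (Finset.mem_singleton_self a)
  have haK1 : a ∉ K1 := Finset.disjoint_left.1 d2 (Finset.mem_singleton_self a)
  -- nonemptiness of J1 \ C and K1 \ C
  have hCc2 : 2 * ∑ i ∈ Cᶜ, L i > ∑ i, L i := by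
    have h1 := short_iff.1 hCshort
    have h2 := sum_compl_eq (L := L) C
    linarith
  have hJ1C : (J1 \ C).Nonempty := by
    rw [Finset.sdiff_nonempty]
    intro hsub
    have hKc : Cᶜ ⊆ K1 := by
      intro x hx
      have hx' : x ∉ C := Finset.mem_compl.1 hx
      have hx2 : x ∈ {a} ∪ J1 ∪ K1 := hu2 ▸ Finset.mem_univ x
      rcases Finset.mem_union.1 hx2 with h | h
      · rcases Finset.mem_union.1 h with h | h
        · exact absurd (Finset.mem_singleton.1 h ▸ haC) hx'
        · exact absurd (hsub h) hx'
      · exact h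
    have := sum_mono hpos hKc
    have := short_iff.1 sK1
    linarith
  have hK1C : (K1 \ C).Nonempty := by
    rw [Finset.sdiff_nonempty]
    intro hsub
    have hJc : Cᶜ ⊆ J1 := by
      intro x hx
      have hx' : x ∉ C := Finset.mem_compl.1 hx
      have hx2 : x ∈ {a} ∪ J1 ∪ K1 := hu2 ▸ Finset.mem_univ x
      rcases Finset.mem_union.1 hx2 with h | h
      · rcases Finset.mem_union.1 h with h | h
        · exact absurd (Finset.mem_singleton.1 h ▸ haC) hx'
        · exact h
      · exact absurd (hsub h) hx'
    have := sum_mono hpos hJc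
    have := short_iff.1 sJ1
    linarith
  -- move 3 : lift C ∩ J1 into slot 1
  have hJ1CI : J1 \ (C ∩ J1) = J1 \ C := by
    ext x
    simp only [Finset.mem_sdiff, Finset.mem_inter]
    tauto
  obtain ⟨r3, v3⟩ := reach_move21 hpos v2 (Finset.inter_subset_right)
    (by rw [hJ1CI]; exact hJ1C)
    (short_mono hpos
      (Finset.union_subset (Finset.singleton_subset_iff.2 haC) Finset.inter_subset_left)
      hCshort)
  rw [hJ1CI] at r3 v3
  -- move 4 : lift C ∩ K1 into slot 1
  have hK1CI : K1 \ (C ∩ K1) = K1 \ C := by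
    ext x
    simp only [Finset.mem_sdiff, Finset.mem_inter]
    tauto
  have hCre : ({a} ∪ C ∩ J1) ∪ C ∩ K1 = C := by
    ext x
    simp only [Finset.mem_union, Finset.mem_inter, Finset.mem_singleton]
    constructor
    · rintro ((rfl | ⟨h, -⟩) | ⟨h, -⟩)
      · exact haC
      · exact h
      · exact h
    · intro hx
      have hx2 : x ∈ {a} ∪ J1 ∪ K1 := hu2 ▸ Finset.mem_univ x
      rcases Finset.mem_union.1 hx2 with h | h
      · rcases Finset.mem_union.1 h with h | h
        · exact Or.inl (Or.inl (Finset.mem_singleton.1 h))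
        · exact Or.inl (Or.inr ⟨hx, h⟩)
      · exact Or.inr ⟨hx, h⟩
  obtain ⟨r4, v4⟩ := reach_move31 hpos v3 (Finset.inter_subset_right)
    (by rw [hK1CI]; exact hK1C)
    (by rw [hCre]; exact hCshort)
  rw [hK1CI, hCre] at r4 v4
  -- move 5 : squeeze slot 3 down to a single element q
  obtain ⟨q, hqmem⟩ := hK1C
  have hqK1 : q ∈ K1 := (Finset.mem_sdiff.1 hqmem).1
  have hqC : q ∉ C := (Finset.mem_sdiff.1 hqmem).2
  have hqCc : q ∈ Cᶜ := Finset.mem_compl.2 hqC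
  have hrm : (K1 \ C) \ ((K1 \ C).erase q) = {q} := by
    ext x
    simp only [Finset.mem_sdiff, Finset.mem_erase, Finset.mem_singleton]
    constructor
    · rintro ⟨⟨hx1, hx2⟩, h2⟩
      by_contra hne
      exact h2 ⟨hne, hx1, hx2⟩
    · rintro rfl
      exact ⟨⟨hqK1, hqC⟩, fun h => h.1 rfl⟩
  have hun : (J1 \ C) ∪ (K1 \ C).erase q = Cᶜ \ {q} := by
    ext x
    simp only [Finset.mem_union, Finset.mem_sdiff, Finset.mem_erase,
      Finset.mem_compl, Finset.mem_singleton]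
    constructor
    · rintro (⟨hx1, hx2⟩ | ⟨hne, hx1, hx2⟩)
      · refine ⟨hx2, fun h => ?_⟩
        subst h
        exact Finset.disjoint_left.1 d3 hx1 hqK1
      · exact ⟨hx2, hne⟩
    · rintro ⟨hx1, hx2⟩
      have hx3 : x ∈ {a} ∪ J1 ∪ K1 := hu2 ▸ Finset.mem_univ x
      rcases Finset.mem_union.1 hx3 with h | h
      · rcases Finset.mem_union.1 h with h | h
        · exact absurd (Finset.mem_singleton.1 h ▸ haC) hx1
        · exact Or.inl ⟨h, hx1⟩
      · exact Or.inr ⟨hx2, h, hx1⟩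
  obtain ⟨r5, v5⟩ := reach_move32 hpos v4 (Finset.erase_subset _ _)
    (by rw [hrm]; exact ⟨q, Finset.mem_singleton_self q⟩)
    (by rw [hun]; exact hkey q hqCc)
  rw [hrm, hun] at r5 v5
  exact ⟨q, hqCc, ((((r1.trans r2).trans r3).trans r4).trans r5).le (by norm_num), v5⟩

lemma normAll (hpos : ∀ i, 0 < L i) (hgen : GenericVec L)
    (a : Fin n) (ha : ∀ i, L i ≤ L a)
    (C : Finset (Fin n)) (haC : a ∈ C) (hCshort : ShortSet L C)
    (hkey : ∀ q ∈ Cᶜ, ShortSet L (Cᶜ \ {q}))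
    (V : LTriple n) (hV : IsVertex L V) :
    ∃ q ∈ Cᶜ, Reach L 5 V (C, Cᶜ \ {q}, {q}) ∧
      IsVertex L (C, Cᶜ \ {q}, {q}) := by
  have hu := hV.2.2.2.2.2.2.2.2.2
  have haV : a ∈ V.1 ∪ V.2.1 ∪ V.2.2 := hu ▸ Finset.mem_univ a
  rcases Finset.mem_union.1 haV with h | h
  · rcases Finset.mem_union.1 h with h | h
    · exact norm1 hpos hgen a ha C haC hCshort hkey V.1 V.2.1 V.2.2 hV h
    · obtain ⟨q, hq, r, vv⟩ := norm1 hpos hgen a ha C haC hCshort hkey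
        V.2.1 V.2.2 V.1 (isVertex_rot hV) h
      exact ⟨q, hq, reach_congr (cyclEq_symm (cyclEq_rot V)) (cyclEq_refl _) r, vv⟩
  · obtain ⟨q, hq, r, vv⟩ := norm1 hpos hgen a ha C haC hCshort hkey
      V.2.2 V.1 V.2.1 (isVertex_rot (isVertex_rot hV)) h
    exact ⟨q, hq, reach_congr (cyclEq_symm (cyclEq_rot2 V)) (cyclEq_refl _) r, vv⟩

/-! ### Connecting two normal forms in ≤ 2 moves -/

lemma midLemma (hpos : ∀ i, 0 < L i)
    (a : Fin n) (C : Finset (Fin n)) (haC : a ∈ C) (hCshort : ShortSet L C)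
    (hkey : ∀ q ∈ Cᶜ, ShortSet L (Cᶜ \ {q}))
    (star : ∀ x y : Fin n, x ≠ y → x ≠ a → y ≠ a → 2 * (L x + L y) < ∑ i, L i)
    (q q' : Fin n) (hq : q ∈ Cᶜ) (hq' : q' ∈ Cᶜ)
    (hvert : IsVertex L (C, Cᶜ \ {q}, {q})) :
    Reach L 2 (C, Cᶜ \ {q}, {q}) (C, Cᶜ \ {q'}, {q'}) := by
  by_cases h : q = q'
  · subst h
    exact (reach_zero hvert).le (by omega)
  · have hqC : q ∉ C := Finset.mem_compl.1 hq
    have hq'C : q' ∉ C := Finset.mem_compl.1 hq'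
    have hqa : q ≠ a := fun he => hqC (he ▸ haC)
    have hq'a : q' ≠ a := fun he => hq'C (he ▸ haC)
    -- move 6 : bring q' next to q in slot 3
    have hsub6 : ({q'} : Finset (Fin n)) ⊆ Cᶜ \ {q} :=
      Finset.singleton_subset_iff.2
        (Finset.mem_sdiff.2 ⟨hq', Finset.notMem_singleton.2 (Ne.symm h)⟩)
    have hrem6 : ((Cᶜ \ {q}) \ {q'}).Nonempty := by
      by_contra hne0
      rw [Finset.not_nonempty_iff_eq_empty] at hne0
      have hsubp : Cᶜ ⊆ ({q, q'} : Finset (Fin n)) := by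
        intro x hx
        by_contra hxn
        simp only [Finset.mem_insert, Finset.mem_singleton] at hxn
        push_neg at hxn
        have hxin : x ∈ (Cᶜ \ {q}) \ {q'} := by
          simp only [Finset.mem_sdiff, Finset.mem_singleton]
          exact ⟨⟨hx, hxn.1⟩, hxn.2⟩
        rw [hne0] at hxin
        exact absurd hxin (Finset.notMem_empty x)
      have h1 := sum_mono hpos hsubp
      rw [Finset.sum_pair h] at h1
      have h2 := short_iff.1 hCshort
      have h3 := sum_compl_eq (L := L) C
      have h4 := star q q' h hqa hq'a
      linarith
    have hshort6 : ShortSet L (({q} : Finset (Fin n)) ∪ {q'}) := by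
      rw [← Finset.insert_eq]
      rw [short_iff, Finset.sum_pair h]
      exact star q q' h hqa hq'a
    obtain ⟨r6, v6⟩ := reach_move23 hpos hvert hsub6 hrem6 hshort6
    -- move 7 : send q back into slot 2
    have hsub7 : ({q} : Finset (Fin n)) ⊆ {q} ∪ {q'} := Finset.subset_union_left
    have hrm7 : (({q} : Finset (Fin n)) ∪ {q'}) \ {q} = {q'} := by
      ext x
      simp only [Finset.mem_sdiff, Finset.mem_union, Finset.mem_singleton]
      constructor
      · rintro ⟨rfl | rfl, h2⟩
        · exact absurd rfl h2
        · rfl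
      · rintro rfl
        exact ⟨Or.inr rfl, fun he => h (he.symm)⟩
    have hun7 : ((Cᶜ \ {q}) \ {q'}) ∪ {q} = Cᶜ \ {q'} := by
      ext x
      simp only [Finset.mem_union, Finset.mem_sdiff, Finset.mem_compl, Finset.mem_singleton]
      constructor
      · rintro (⟨⟨h1, h2⟩, h3⟩ | rfl)
        · exact ⟨h1, h3⟩
        · exact ⟨hqC, h⟩
      · rintro ⟨h1, h2⟩
        by_cases hxq : x = q
        · exact Or.inr hxq
        · exact Or.inl ⟨⟨h1, hxq⟩, h2⟩
    obtain ⟨r7, v7⟩ := reach_move32 hpos v6 hsub7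
      (by rw [hrm7]; exact ⟨q', Finset.mem_singleton_self q'⟩)
      (by rw [hun7]; exact hkey q' hq')
    rw [hrm7, hun7] at r7
    exact (r6.trans r7).le (by norm_num)
end NavProof
/-- If `L` is generic, satisfies the triangle inequality, and
`s₂ + s₃ < (l₁ + ⋯ + lₙ)/2`, then any two vertices of `Γ(L)` are joined by a path in
`Γ(L)` of length at most 13; in particular `Γ(L)` is connected. -/
theorem navigation_at_most_13 (n : ℕ) (hn : 3 ≤ n) (L : Fin n → ℝ)
    (hpos : ∀ i, 0 < L i) (hgen : GenericVec L) (htri : TriangleIneq L)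
    (hs : s2 L + s3 L < (∑ i, L i) / 2) :
    ∀ V W : LTriple n, IsVertex L V → IsVertex L W →
      ∃ m ≤ 13, GammaPath L m V W := by
  classical
  intro V W hV hW
  -- a maximal-length index
  obtain ⟨a, -, haW⟩ := Finset.exists_max_image Finset.univ L
    ⟨⟨0, by omega⟩, Finset.mem_univ _⟩
  have ha : ∀ i, L i ≤ L a := fun i => haW i (Finset.mem_univ i)
  have star := NavProof.pair_lt_half hn hs a ha
  -- a maximal buffer set `Z`
  obtain ⟨Z, hZmem, hZmax⟩ := Finset.exists_max_image
    (((Finset.univ.erase a).powerset).filter (fun Zc => ShortSet L (insert a Zc)))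
    (fun Zc => ∑ i ∈ Zc, L i)
    ⟨∅, Finset.mem_filter.2 ⟨Finset.mem_powerset.2 (Finset.empty_subset _),
      by simpa using htri a⟩⟩
  obtain ⟨hZpow, hZshort⟩ := Finset.mem_filter.1 hZmem
  have hZsub : Z ⊆ Finset.univ.erase a := Finset.mem_powerset.1 hZpow
  have haZ : a ∉ Z := fun h => (Finset.mem_erase.1 (hZsub h)).1 rfl
  set C := insert a Z with hCdef
  have haC : a ∈ C := Finset.mem_insert_self a Z
  have hCshort : ShortSet L C := hZshort
  have hkey : ∀ q ∈ Cᶜ, ShortSet L (Cᶜ \ {q}) := by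
    intro q hq
    have hqC : q ∉ C := Finset.mem_compl.1 hq
    have hqa : q ≠ a := fun he => hqC (he ▸ haC)
    have hqZ : q ∉ Z := fun he => hqC (Finset.mem_insert_of_mem he)
    have hlong : (∑ i, L i) < 2 * ∑ i ∈ insert q C, L i := by
      rcases lt_trichotomy (2 * ∑ i ∈ insert q C, L i) (∑ i, L i) with hlt | heq | hgt
      · exfalso
        have hmem : insert q Z ∈ ((Finset.univ.erase a).powerset).filter
            (fun Zc => ShortSet L (insert a Zc)) := by
          refine Finset.mem_filter.2 ⟨Finset.mem_powerset.2 ?_, ?_⟩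
          · exact Finset.insert_subset (Finset.mem_erase.2 ⟨hqa, Finset.mem_univ q⟩) hZsub
          · rw [Finset.insert_comm]
            exact NavProof.short_iff.2 hlt
        have hle := hZmax (insert q Z) hmem
        rw [Finset.sum_insert hqZ] at hle
        have := hpos q
        linarith
      · exact absurd heq (NavProof.gen2 hgen (insert q C))
      · exact hgt
    have hce : Cᶜ \ {q} = (insert q C)ᶜ := by
      ext x
      simp only [Finset.mem_sdiff, Finset.mem_compl, Finset.mem_singleton,
        Finset.mem_insert]
      tauto
    rw [hce, NavProof.short_iff, NavProof.sum_compl_eq]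
    linarith
  obtain ⟨q, hq, rV, vV⟩ := NavProof.normAll hpos hgen a ha C haC hCshort hkey V hV
  obtain ⟨q', hq', rW, vW⟩ := NavProof.normAll hpos hgen a ha C haC hCshort hkey W hW
  have rmid := NavProof.midLemma hpos a C haC hCshort hkey star q q' hq hq' vV
  have rtotal : NavProof.Reach L 12 V W :=
    ((rV.trans rmid).trans rW.symm).le (by norm_num)
  obtain ⟨m, hm, hpath⟩ := rtotal
  exact ⟨m, by omega, hpath⟩
end

section
/- Suppose L is generic, satisfies the triangle inequality, and s₂ + s₃ > (l_1 + … + l_n)/2. Then any two vertices of Γ(L) lying in the same connected component of Γ(L) are joined by a path in Γ(L) of length at most 7. -/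
open Finset

lemma my_short_iff {n : ℕ} (L : Fin n → ℝ) (I : Finset (Fin n)) :
    ShortSet L I ↔ ∑ i ∈ I, L i < (∑ i, L i) / 2 := by
  have h := Finset.sum_add_sum_compl I L
  unfold ShortSet; constructor <;> intro <;> linarith

lemma my_pair_le_sum {n : ℕ} {L : Fin n → ℝ} {I : Finset (Fin n)} {x y : Fin n}
    (hpos : ∀ i, 0 < L i) (hxy : x ≠ y) (hx : x ∈ I) (hy : y ∈ I) :
    L x + L y ≤ ∑ i ∈ I, L i := by
  have hsub : ({x, y} : Finset (Fin n)) ⊆ I := by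
    intro z hz; simp only [mem_insert, mem_singleton] at hz
    rcases hz with rfl | rfl <;> assumption
  calc L x + L y = ∑ i ∈ ({x, y} : Finset (Fin n)), L i := (Finset.sum_pair hxy).symm
    _ ≤ ∑ i ∈ I, L i := Finset.sum_le_sum_of_subset_of_nonneg hsub (fun i _ _ => (hpos i).le)

lemma my_noshare {n : ℕ} {L : Fin n → ℝ} {I : Finset (Fin n)} {x y : Fin n}
    (hpos : ∀ i, 0 < L i) (hxy : x ≠ y) (hsum : (∑ i, L i) / 2 < L x + L y)
    (hI : ShortSet L I) (hx : x ∈ I) (hy : y ∈ I) : False := by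
  have h1 := my_pair_le_sum hpos hxy hx hy
  have h2 := (my_short_iff L I).1 hI
  linarith

lemma my_short_of_pair_not_mem {n : ℕ} {L : Fin n → ℝ} {I : Finset (Fin n)} {x y : Fin n}
    (hpos : ∀ i, 0 < L i) (hxy : x ≠ y) (hsum : (∑ i, L i) / 2 < L x + L y)
    (hx : x ∉ I) (hy : y ∉ I) : ShortSet L I := by
  have h1 : L x + L y ≤ ∑ i ∈ Iᶜ, L i :=
    my_pair_le_sum hpos hxy (by simpa using hx) (by simpa using hy)
  have h := Finset.sum_add_sum_compl I L
  unfold ShortSet; linarith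

lemma exists_three_anchors {n : ℕ} (hn : 3 ≤ n) (L : Fin n → ℝ)
    (hs : (∑ i, L i) / 2 < s2 L + s3 L) :
    ∃ a b c : Fin n, a ≠ b ∧ a ≠ c ∧ b ≠ c ∧
      (∑ i, L i) / 2 < L a + L b ∧ (∑ i, L i) / 2 < L a + L c ∧
      (∑ i, L i) / 2 < L b + L c := by
  have hperm : (sortedDesc L).Perm (List.ofFn L) := List.perm_insertionSort _ _
  have hsorted : (sortedDesc L).Pairwise (· ≥ ·) := List.pairwise_insertionSort _ _
  have hlen : (sortedDesc L).length = n := by rw [hperm.length_eq, List.length_ofFn]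
  obtain ⟨x, t1, h1⟩ : ∃ x t, sortedDesc L = x :: t := by
    cases h : sortedDesc L with
    | nil => rw [h] at hlen; simp at hlen; omega
    | cons x t => exact ⟨x, t, rfl⟩
  obtain ⟨y, t2, h2⟩ : ∃ y t, t1 = y :: t := by
    cases h : t1 with
    | nil => rw [h1, h] at hlen; simp at hlen; omega
    | cons x t => exact ⟨x, t, rfl⟩
  obtain ⟨z, t3, h3⟩ : ∃ z t, t2 = z :: t := by
    cases h : t2 with
    | nil => rw [h1, h2, h] at hlen; simp at hlen; omega
    | cons x t => exact ⟨x, t, rfl⟩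
  rw [h2, h3] at h1
  have hs2 : s2 L = y := by rw [s2, h1]; rfl
  have hs3 : s3 L = z := by rw [s3, h1]; rfl
  rw [h1] at hsorted
  have hxy : x ≥ y := (List.pairwise_cons.1 hsorted).1 y (by simp)
  have hyz : y ≥ z := (List.pairwise_cons.1 (List.pairwise_cons.1 hsorted).2).1 z (by simp)
  -- counting
  have key : ∀ r : ℝ, (((univ : Finset (Fin n)).filter (fun i => r ≤ L i)).card : ℕ)
      = (List.ofFn L).countP (fun v => decide (r ≤ v)) := by
    intro r
    have e1 : Multiset.countP (fun v => r ≤ v) (Finset.univ.val.map L)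
        = ((univ : Finset (Fin n)).filter (fun i => r ≤ L i)).card := by
      rw [Multiset.countP_map]; rfl
    have e2 : Multiset.countP (fun v => r ≤ v) (Finset.univ.val.map L)
        = (List.ofFn L).countP (fun v => decide (r ≤ v)) := by
      rw [Fin.univ_val_map, Multiset.coe_countP]
    rw [← e1, e2]
  have hcountlist : ∀ r : ℝ, (List.ofFn L).countP (fun v => decide (r ≤ v))
      = (x :: y :: z :: t3).countP (fun v => decide (r ≤ v)) := by
    intro r
    rw [← h1]
    exact (hperm.countP_eq _).symm
  have h2card : 2 ≤ ((univ : Finset (Fin n)).filter (fun i => y ≤ L i)).card := by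
    rw [key y, hcountlist y]
    simp only [List.countP_cons, decide_eq_true_eq]
    have e1 : (y ≤ x) := hxy
    have e2 : (y ≤ y) := le_refl y
    simp [e1, e2]
  have h3card : 3 ≤ ((univ : Finset (Fin n)).filter (fun i => z ≤ L i)).card := by
    rw [key z, hcountlist z]
    simp only [List.countP_cons, decide_eq_true_eq]
    have e1 : (z ≤ x) := le_trans hyz hxy
    have e2 : (z ≤ y) := hyz
    have e3 : (z ≤ z) := le_refl z
    simp [e1, e2, e3]
  obtain ⟨b, hb, c, hc, hbc⟩ := Finset.one_lt_card.1 (by omega : 1 <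
    ((univ : Finset (Fin n)).filter (fun i => y ≤ L i)).card)
  have hLb : y ≤ L b := (Finset.mem_filter.1 hb).2
  have hLc : y ≤ L c := (Finset.mem_filter.1 hc).2
  have hsub : ({b, c} : Finset (Fin n)) ⊆ (univ : Finset (Fin n)).filter (fun i => z ≤ L i) := by
    intro w hw
    simp only [mem_insert, mem_singleton] at hw
    rcases hw with rfl | rfl <;> exact Finset.mem_filter.2 ⟨mem_univ _, le_trans hyz (by assumption)⟩
  have hss : ({b, c} : Finset (Fin n)) ⊂ (univ : Finset (Fin n)).filter (fun i => z ≤ L i) := by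
    refine Finset.ssubset_of_subset_of_ssubset (Finset.Subset.refl _) ?_
    refine lt_of_le_of_ne hsub ?_
    intro hEq
    have : ({b, c} : Finset (Fin n)).card = 2 := Finset.card_pair hbc
    rw [hEq] at this
    omega
  obtain ⟨a, ha, hanot⟩ := Finset.exists_of_ssubset hss
  have hLa : z ≤ L a := (Finset.mem_filter.1 ha).2
  simp only [mem_insert, mem_singleton, not_or] at hanot
  obtain ⟨hab, hac⟩ := hanot
  rw [hs2, hs3] at hs
  exact ⟨a, b, c, hab, hac, hbc, by linarith, by linarith, by linarith⟩

section Structural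
variable {n : ℕ} {L : Fin n → ℝ}

lemma rot3 (V : LTriple n) : rotT (rotT (rotT V)) = V := rfl

lemma cyclEq_refl (V : LTriple n) : CyclEq V V := Or.inl rfl

lemma cyclEq_rot (V : LTriple n) : CyclEq V (rotT V) := Or.inr (Or.inl rfl)

lemma cyclEq_symm {V W : LTriple n} (h : CyclEq V W) : CyclEq W V := by
  rcases h with rfl | rfl | rfl
  · exact Or.inl rfl
  · exact Or.inr (Or.inr rfl)
  · exact Or.inr (Or.inl rfl)

lemma cyclEq_trans {V W X : LTriple n} (h1 : CyclEq V W) (h2 : CyclEq W X) :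
    CyclEq V X := by
  rcases h1 with rfl | rfl | rfl <;> rcases h2 with rfl | rfl | rfl <;>
    first
      | exact Or.inl rfl
      | exact Or.inr (Or.inl rfl)
      | exact Or.inr (Or.inr rfl)

lemma isVertex_rot {V : LTriple n} (h : IsVertex L V) : IsVertex L (rotT V) := by
  obtain ⟨h1, h2, h3, h4, h5, h6, h7, h8, h9, h10⟩ := h
  refine ⟨h2, h3, h1, h5, h6, h4, h9, h7.symm, h8.symm, ?_⟩
  show V.2.1 ∪ V.2.2 ∪ V.1 = univ
  rw [← h10]; ac_rfl

lemma isVertex_cyclEq {V W : LTriple n} (h : CyclEq V W) (hV : IsVertex L V) :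
    IsVertex L W := by
  rcases h with rfl | rfl | rfl
  · exact hV
  · exact isVertex_rot hV
  · exact isVertex_rot (isVertex_rot hV)

lemma gammaAdj_symm {V W : LTriple n} (h : GammaAdj L V W) : GammaAdj L W V := by
  rcases h with ⟨X, Y, a1, a2, a3⟩ | ⟨X, Y, a1, a2, a3⟩
  · exact Or.inr ⟨X, Y, a1, a2, a3⟩
  · exact Or.inl ⟨X, Y, a1, a2, a3⟩

lemma gammaAdj_congr_left {V V₀ W : LTriple n} (hc : CyclEq V V₀)
    (h : GammaAdj L V W) : GammaAdj L V₀ W := by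
  rcases h with ⟨X, Y, a1, a2, a3⟩ | ⟨X, Y, a1, a2, a3⟩
  · exact Or.inl ⟨X, Y, cyclEq_trans (cyclEq_symm hc) a1, a2, a3⟩
  · exact Or.inr ⟨X, Y, a1, a2, cyclEq_trans (cyclEq_symm hc) a3⟩

lemma gammaPath_zero {V : LTriple n} (hV : IsVertex L V) : GammaPath L 0 V V :=
  ⟨fun _ => V, Or.inl rfl, Or.inl rfl, fun _ _ => hV, fun i hi => absurd hi (by omega)⟩

lemma gammaPath_one {V Y W : LTriple n} (hV : IsVertex L V) (hY : IsVertex L Y)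
    (hadj : GammaAdj L V Y) (hW : CyclEq W Y) : GammaPath L 1 V W := by
  refine ⟨fun i => if i = 0 then V else Y, Or.inl rfl, by simpa using hW, ?_, ?_⟩
  · intro i _
    by_cases h : i = 0 <;> simp [h, hV, hY]
  · intro i hi
    have : i = 0 := by omega
    subst this
    simpa using hadj

lemma gammaPath_congr_left {m : ℕ} {V V' W : LTriple n} (hc : CyclEq V V')
    (h : GammaPath L m V' W) : GammaPath L m V W := by
  obtain ⟨f, h1, h2, h3, h4⟩ := h
  exact ⟨f, cyclEq_trans hc h1, h2, h3, h4⟩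

lemma gammaPath_symm {m : ℕ} {V W : LTriple n} (h : GammaPath L m V W) :
    GammaPath L m W V := by
  obtain ⟨f, h1, h2, h3, h4⟩ := h
  refine ⟨fun i => f (m - i), by simpa using h2, by simpa using h1,
    fun i _ => h3 _ (by omega), ?_⟩
  intro i hi
  have e : m - (i + 1) + 1 = m - i := by omega
  have := h4 (m - (i + 1)) (by omega)
  rw [e] at this
  exact gammaAdj_symm this

lemma gammaPath_trans {p q : ℕ} {V X W : LTriple n} (h1 : GammaPath L p V X)
    (h2 : GammaPath L q X W) : GammaPath L (p + q) V W := by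
  obtain ⟨f, a1, a2, a3, a4⟩ := h1
  obtain ⟨g, b1, b2, b3, b4⟩ := h2
  refine ⟨fun i => if i ≤ p then f i else g (i - p), by simpa using a1, ?_, ?_, ?_⟩
  · by_cases hq : q = 0
    · subst hq
      simp only [add_zero, le_refl, if_true]
      exact cyclEq_trans (cyclEq_trans b2 (cyclEq_symm b1)) a2
    · have : ¬ (p + q ≤ p) := by omega
      simp only [this, if_false]
      have : p + q - p = q := by omega
      rw [this]; exact b2
  · intro i hi
    by_cases h : i ≤ p
    · simp only [h, if_true]; exact a3 i h
    · simp only [h, if_false]; exact b3 (i - p) (by omega)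
  · intro i hi
    by_cases h : i + 1 ≤ p
    · have h' : i ≤ p := by omega
      simp only [h, h', if_true]
      exact a4 i (by omega)
    · by_cases h' : i ≤ p
      · have hip : i = p := by omega
        subst hip
        have hq : 0 < q := by omega
        simp only [h, h', if_true, if_false]
        have e : i + 1 - i = 1 := by omega
        rw [e]
        have hadj := b4 0 hq
        exact gammaAdj_congr_left (cyclEq_trans (cyclEq_symm b1) a2) hadj
      · simp only [h, h', if_false]
        have e : i + 1 - p = (i - p) + 1 := by omega
        rw [e]
        exact b4 (i - p) (by omega)

end Structural

section Anchors

variable {n : ℕ} {L : Fin n → ℝ} {a b c : Fin n} {V W : LTriple n}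

/-- Orientation predicate: `b` lies in the part cyclically following the part of `a`. -/
def OrPos (a b : Fin n) (V : LTriple n) : Prop :=
  (a ∈ V.1 ∧ b ∈ V.2.1) ∨ (a ∈ V.2.1 ∧ b ∈ V.2.2) ∨ (a ∈ V.2.2 ∧ b ∈ V.1)

lemma orPos_rot (V : LTriple n) : OrPos a b (rotT V) ↔ OrPos a b V := by
  simp only [OrPos, rotT]; tauto

lemma orPos_cyclEq (h : CyclEq V W) : OrPos a b W ↔ OrPos a b V := by
  rcases h with rfl | rfl | rfl
  · rfl
  · rw [orPos_rot]
  · rw [orPos_rot, orPos_rot]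

lemma mem_parts (hV : IsVertex L V) (x : Fin n) : x ∈ V.1 ∨ x ∈ V.2.1 ∨ x ∈ V.2.2 := by
  obtain ⟨-, -, -, -, -, -, -, -, -, h10⟩ := hV
  have hx : x ∈ V.1 ∪ V.2.1 ∪ V.2.2 := h10 ▸ mem_univ x
  simpa [Finset.mem_union, or_assoc] using hx

lemma not_orPos (hV : IsVertex L V) (ha : a ∈ V.1) (hb : b ∈ V.2.2) : ¬ OrPos a b V := by
  obtain ⟨-, -, -, -, -, -, h7, h8, h9, -⟩ := hV
  rintro (⟨ha', hb'⟩ | ⟨ha', hb'⟩ | ⟨ha', hb'⟩)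
  · exact (Finset.disjoint_left.1 h9 hb') hb
  · exact (Finset.disjoint_left.1 h7 ha) ha'
  · exact (Finset.disjoint_left.1 h8 ha) ha'

lemma exists_anchor_mid (hpos : ∀ i, 0 < L i) (hab : a ≠ b) (hac : a ≠ c) (hbc : b ≠ c)
    (sab : (∑ i, L i) / 2 < L a + L b) (sac : (∑ i, L i) / 2 < L a + L c)
    (sbc : (∑ i, L i) / 2 < L b + L c) (hV : IsVertex L V) :
    a ∈ V.2.1 ∨ b ∈ V.2.1 ∨ c ∈ V.2.1 := by
  by_contra hcon
  push_neg at hcon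
  obtain ⟨hna, hnb, hnc⟩ := hcon
  have ha' : a ∈ V.1 ∨ a ∈ V.2.2 := by
    rcases mem_parts hV a with h | h | h
    exacts [Or.inl h, absurd h hna, Or.inr h]
  have hb' : b ∈ V.1 ∨ b ∈ V.2.2 := by
    rcases mem_parts hV b with h | h | h
    exacts [Or.inl h, absurd h hnb, Or.inr h]
  have hc' : c ∈ V.1 ∨ c ∈ V.2.2 := by
    rcases mem_parts hV c with h | h | h
    exacts [Or.inl h, absurd h hnc, Or.inr h]
  obtain ⟨-, -, -, hsI, -, hsK, -, -, -, -⟩ := hV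
  rcases ha' with ha | ha <;> rcases hb' with hb | hb <;> rcases hc' with hc | hc <;>
    first
      | exact my_noshare hpos hab sab hsI ha hb
      | exact my_noshare hpos hac sac hsI ha hc
      | exact my_noshare hpos hbc sbc hsI hb hc
      | exact my_noshare hpos hab sab hsK ha hb
      | exact my_noshare hpos hac sac hsK ha hc
      | exact my_noshare hpos hbc sbc hsK hb hc

lemma moveStep_stable (hpos : ∀ i, 0 < L i) (hab : a ≠ b) (hac : a ≠ c) (hbc : b ≠ c)
    (sab : (∑ i, L i) / 2 < L a + L b) (sac : (∑ i, L i) / 2 < L a + L c)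
    (sbc : (∑ i, L i) / 2 < L b + L c) (hV : IsVertex L V) (hm : MoveStep L V W) :
    ((a ∈ W.1 ↔ a ∈ V.1) ∧ (a ∈ W.2.1 ↔ a ∈ V.2.1) ∧ (a ∈ W.2.2 ↔ a ∈ V.2.2)) ∧
    ((b ∈ W.1 ↔ b ∈ V.1) ∧ (b ∈ W.2.1 ↔ b ∈ V.2.1) ∧ (b ∈ W.2.2 ↔ b ∈ V.2.2)) := by
  obtain ⟨S, hSne, hSsub, hshort, rfl⟩ := hm
  have hIJdisj : Disjoint V.1 V.2.1 := hV.2.2.2.2.2.2.1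
  have key : ∀ x y : Fin n, x ≠ y → (∑ i, L i) / 2 < L x + L y → y ∈ V.2.1 → x ∉ S := by
    intro x y hxy hsum hy hxS
    exact my_noshare hpos hxy hsum hshort (Finset.mem_union_right _ hxS)
      (Finset.mem_union_left _ hy)
  have hmidS : ∀ y, y ∈ V.2.1 → y ∉ S := fun y hy hyS =>
    (Finset.disjoint_left.1 hIJdisj (hSsub.1 hyS)) hy
  have hanchors : a ∉ S ∧ b ∉ S := by
    rcases exists_anchor_mid hpos hab hac hbc sab sac sbc hV with hy | hy | hy
    · exact ⟨hmidS a hy, key b a hab.symm (by linarith) hy⟩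
    · exact ⟨key a b hab sab hy, hmidS b hy⟩
    · exact ⟨key a c hac sac hy, key b c hbc sbc hy⟩
  obtain ⟨haS, hbS⟩ := hanchors
  exact ⟨⟨by simp [Finset.mem_sdiff, haS], by simp [Finset.mem_union, haS], Iff.rfl⟩,
    ⟨by simp [Finset.mem_sdiff, hbS], by simp [Finset.mem_union, hbS], Iff.rfl⟩⟩

lemma orPos_adj (hpos : ∀ i, 0 < L i) (hab : a ≠ b) (hac : a ≠ c) (hbc : b ≠ c)
    (sab : (∑ i, L i) / 2 < L a + L b) (sac : (∑ i, L i) / 2 < L a + L c)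
    (sbc : (∑ i, L i) / 2 < L b + L c) (hV : IsVertex L V) (hW : IsVertex L W)
    (h : GammaAdj L V W) : OrPos a b V ↔ OrPos a b W := by
  have main : ∀ X Y : LTriple n, IsVertex L X → MoveStep L X Y →
      (OrPos a b X ↔ OrPos a b Y) := by
    intro X Y hX hm
    obtain ⟨⟨e1, e2, e3⟩, ⟨f1, f2, f3⟩⟩ := moveStep_stable hpos hab hac hbc sab sac sbc hX hm
    simp only [OrPos, e1, e2, e3, f1, f2, f3]
  rcases h with ⟨V', W', h1, h2, h3⟩ | ⟨W', V', h1, h2, h3⟩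
  · have hV' := isVertex_cyclEq h1 hV
    exact ((orPos_cyclEq h1).symm.trans (main V' W' hV' h2)).trans (orPos_cyclEq h3)
  · have hW' := isVertex_cyclEq h1 hW
    exact ((orPos_cyclEq h3).symm.trans (main W' V' hW' h2).symm).trans (orPos_cyclEq h1)

lemma orPos_path {m : ℕ} (hpos : ∀ i, 0 < L i) (hab : a ≠ b) (hac : a ≠ c) (hbc : b ≠ c)
    (sab : (∑ i, L i) / 2 < L a + L b) (sac : (∑ i, L i) / 2 < L a + L c)
    (sbc : (∑ i, L i) / 2 < L b + L c) (h : GammaPath L m V W) :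
    OrPos a b V ↔ OrPos a b W := by
  obtain ⟨f, h1, h2, h3, h4⟩ := h
  have H : ∀ i, i ≤ m → (OrPos a b (f 0) ↔ OrPos a b (f i)) := by
    intro i
    induction i with
    | zero => intro _; rfl
    | succ k ih =>
      intro hk
      exact (ih (by omega)).trans (orPos_adj hpos hab hac hbc sab sac sbc
        (h3 k (by omega)) (h3 (k + 1) hk) (h4 k (by omega)))
  exact ((orPos_cyclEq h1).symm.trans (H m le_rfl)).trans (orPos_cyclEq h2)

/-- The canonical vertex `({a}, {b}, {a,b}ᶜ)`. -/
def CanonT (n : ℕ) (a b : Fin n) : LTriple n := ({a}, {b}, ({a, b} : Finset (Fin n))ᶜ)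

lemma canon_vertex (hn : 3 ≤ n) (htri : TriangleIneq L) (hpos : ∀ i, 0 < L i)
    (hab : a ≠ b) (sab : (∑ i, L i) / 2 < L a + L b) : IsVertex L (CanonT n a b) := by
  have h3' : (({a, b} : Finset (Fin n))ᶜ).Nonempty := by
    rw [← Finset.card_pos, Finset.card_compl, Finset.card_pair hab]
    have : Fintype.card (Fin n) = n := Fintype.card_fin n
    omega
  have hshort : ShortSet L (({a, b} : Finset (Fin n))ᶜ) :=
    my_short_of_pair_not_mem hpos hab sab (by simp) (by simp)
  refine ⟨singleton_nonempty _, singleton_nonempty _, h3', htri a, htri b, hshort,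
    ?_, ?_, ?_, ?_⟩
  · show Disjoint ({a} : Finset (Fin n)) {b}
    simp only [Finset.disjoint_singleton_left, Finset.mem_singleton]
    exact hab
  · show Disjoint ({a} : Finset (Fin n)) ({a, b} : Finset (Fin n))ᶜ
    simp [Finset.disjoint_singleton_left]
  · show Disjoint ({b} : Finset (Fin n)) ({a, b} : Finset (Fin n))ᶜ
    simp [Finset.disjoint_singleton_left]
  · show ({a} : Finset (Fin n)) ∪ {b} ∪ ({a, b} : Finset (Fin n))ᶜ = univ
    ext x
    simp only [Finset.mem_union, Finset.mem_singleton, Finset.mem_compl,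
      Finset.mem_insert, Finset.mem_univ, iff_true]
    tauto

lemma rotate_to_first (hV : IsVertex L V) (x : Fin n)
    (hx : x ∈ V.1 ∨ x ∈ V.2.1 ∨ x ∈ V.2.2) :
    ∃ V' : LTriple n, CyclEq V V' ∧ x ∈ V'.1 := by
  rcases hx with h | h | h
  · exact ⟨V, cyclEq_refl V, h⟩
  · exact ⟨rotT V, cyclEq_rot V, h⟩
  · exact ⟨rotT (rotT V), Or.inr (Or.inr rfl), h⟩

lemma reach1 (hn : 3 ≤ n) (htri : TriangleIneq L) (hpos : ∀ i, 0 < L i)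
    (hab : a ≠ b) (hac : a ≠ c) (hbc : b ≠ c)
    (sab : (∑ i, L i) / 2 < L a + L b) (sac : (∑ i, L i) / 2 < L a + L c)
    (sbc : (∑ i, L i) / 2 < L b + L c) (hV : IsVertex L V)
    (h1 : V.1 = {a}) (hb : b ∈ V.2.1) (hc : c ∈ V.2.2) :
    ∃ p ≤ 1, GammaPath L p V (CanonT n a b) := by
  obtain ⟨-, -, -, -, hsJ, hsK, hIJ, hIK, hJK, hU⟩ := id hV
  by_cases hJb : V.2.1 = {b}
  · refine ⟨0, by omega, ?_⟩
    have hK : V.2.2 = ({a, b} : Finset (Fin n))ᶜ := by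
      ext x
      simp only [Finset.mem_compl, Finset.mem_insert, Finset.mem_singleton]
      constructor
      · intro hx
        have hx1 : x ∉ V.1 := Finset.disjoint_right.1 hIK hx
        have hx2 : x ∉ V.2.1 := Finset.disjoint_right.1 hJK hx
        rw [h1] at hx1; rw [hJb] at hx2
        simp only [Finset.mem_singleton] at hx1 hx2
        tauto
      · intro hx
        push_neg at hx
        have hmem : x ∈ V.1 ∪ V.2.1 ∪ V.2.2 := hU ▸ mem_univ x
        simp only [Finset.mem_union, h1, hJb, Finset.mem_singleton] at hmem
        tauto
    have hVeq : V = CanonT n a b := by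
      have e : V = (V.1, V.2.1, V.2.2) := rfl
      rw [e, h1, hJb, hK]; rfl
    rw [← hVeq]
    exact gammaPath_zero hV
  · have hSne : (V.2.1 \ {b}).Nonempty := by
      rw [Finset.sdiff_nonempty]
      intro hsub'
      exact hJb (Finset.Subset.antisymm hsub' (Finset.singleton_subset_iff.2 hb))
    have hBeq : V.2.1 \ (V.2.1 \ {b}) = {b} := by
      ext x
      simp only [Finset.mem_sdiff, Finset.mem_singleton, not_and, not_not]
      constructor
      · rintro ⟨hx, hx2⟩; exact hx2 hx
      · rintro rfl; exact ⟨hb, fun _ => rfl⟩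
    have hCeq : V.2.2 ∪ (V.2.1 \ {b}) = ({a, b} : Finset (Fin n))ᶜ := by
      ext x
      simp only [Finset.mem_union, Finset.mem_sdiff, Finset.mem_singleton,
        Finset.mem_compl, Finset.mem_insert]
      constructor
      · rintro (hx | ⟨hx, hxb⟩)
        · have hx1 : x ∉ V.1 := Finset.disjoint_right.1 hIK hx
          have hx2 : x ∉ V.2.1 := Finset.disjoint_right.1 hJK hx
          rw [h1] at hx1
          simp only [Finset.mem_singleton] at hx1
          rintro (rfl | rfl)
          · exact hx1 rfl
          · exact hx2 hb
        · have hx1 : x ∉ V.1 := Finset.disjoint_left.1 hIJ.symm hx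
          rw [h1] at hx1
          simp only [Finset.mem_singleton] at hx1
          tauto
      · intro hx
        push_neg at hx
        obtain ⟨hxa, hxb⟩ := hx
        have hmem : x ∈ V.1 ∪ V.2.1 ∪ V.2.2 := hU ▸ mem_univ x
        simp only [Finset.mem_union, h1, Finset.mem_singleton] at hmem
        rcases hmem with (rfl | hx') | hx'
        · exact absurd rfl hxa
        · exact Or.inr ⟨hx', hxb⟩
        · exact Or.inl hx'
    have hshortC : ShortSet L (V.2.2 ∪ (V.2.1 \ {b})) := by
      rw [hCeq]
      exact my_short_of_pair_not_mem hpos hab sab (by simp) (by simp)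
    have hmove : MoveStep L (rotT V) ({b}, ({a, b} : Finset (Fin n))ᶜ, {a}) := by
      refine ⟨V.2.1 \ {b}, hSne, ?_, hshortC, ?_⟩
      · exact Finset.sdiff_ssubset (Finset.singleton_subset_iff.2 hb) (Finset.singleton_nonempty b)
      · show ({b}, ({a, b} : Finset (Fin n))ᶜ, {a})
          = (V.2.1 \ (V.2.1 \ {b}), V.2.2 ∪ (V.2.1 \ {b}), V.1)
        rw [hBeq, hCeq, h1]
    have hadj : GammaAdj L V ({b}, ({a, b} : Finset (Fin n))ᶜ, {a}) :=
      Or.inl ⟨rotT V, _, cyclEq_rot V, hmove, cyclEq_refl _⟩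
    have hYvert : IsVertex L (({b}, ({a, b} : Finset (Fin n))ᶜ, {a}) : LTriple n) :=
      isVertex_rot (canon_vertex hn htri hpos hab sab)
    exact ⟨1, le_rfl, gammaPath_one hV hYvert hadj (cyclEq_rot _)⟩


lemma reach2 (hn : 3 ≤ n) (htri : TriangleIneq L) (hpos : ∀ i, 0 < L i)
    (hab : a ≠ b) (hac : a ≠ c) (hbc : b ≠ c)
    (sab : (∑ i, L i) / 2 < L a + L b) (sac : (∑ i, L i) / 2 < L a + L c)
    (sbc : (∑ i, L i) / 2 < L b + L c) (hV : IsVertex L V)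
    (ha : a ∈ V.1) (hb : b ∈ V.2.1) (hc : c ∈ V.2.2) :
    ∃ p ≤ 2, GammaPath L p V (CanonT n a b) := by
  obtain ⟨-, hJne, hKne, hsI, hsJ, hsK, hIJ, hIK, hJK, hU⟩ := id hV
  by_cases h1 : V.1 = {a}
  · obtain ⟨p, hp, hpath⟩ := reach1 hn htri hpos hab hac hbc sab sac sbc hV h1 hb hc
    exact ⟨p, by omega, hpath⟩
  · have hSne : (V.1 \ {a}).Nonempty := by
      rw [Finset.sdiff_nonempty]
      intro hsub'
      exact h1 (Finset.Subset.antisymm hsub' (Finset.singleton_subset_iff.2 ha))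
    have hSsub : V.1 \ {a} ⊂ V.1 :=
      Finset.sdiff_ssubset (Finset.singleton_subset_iff.2 ha) (Finset.singleton_nonempty a)
    have haS : a ∉ V.1 \ {a} := by simp
    have hshort : ShortSet L (V.2.1 ∪ (V.1 \ {a})) := by
      have hc1 : c ∉ V.2.1 := Finset.disjoint_right.1 hJK hc
      have hc2 : c ∉ V.1 \ {a} := fun hx =>
        (Finset.disjoint_left.1 hIK (Finset.sdiff_subset hx)) hc
      have ha1 : a ∉ V.2.1 := Finset.disjoint_left.1 hIJ ha
      refine my_short_of_pair_not_mem hpos hac sac ?_ ?_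
      · simp [Finset.mem_union, ha1, haS]
      · simp [Finset.mem_union, hc1, hc2]
    have hAeq : V.1 \ (V.1 \ {a}) = {a} := by
      ext x
      simp only [Finset.mem_sdiff, Finset.mem_singleton, not_and, not_not]
      constructor
      · rintro ⟨hx, hx2⟩; exact hx2 hx
      · rintro rfl; exact ⟨ha, fun _ => rfl⟩
    have hmove : MoveStep L V (V.1 \ (V.1 \ {a}), V.2.1 ∪ (V.1 \ {a}), V.2.2) :=
      ⟨V.1 \ {a}, hSne, hSsub, hshort, rfl⟩
    have hadj : GammaAdj L V (V.1 \ (V.1 \ {a}), V.2.1 ∪ (V.1 \ {a}), V.2.2) :=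
      Or.inl ⟨V, _, cyclEq_refl V, hmove, cyclEq_refl _⟩
    have hYvert : IsVertex L ((V.1 \ (V.1 \ {a}), V.2.1 ∪ (V.1 \ {a}), V.2.2) : LTriple n) := by
      refine ⟨?_, ?_, hKne, ?_, hshort, hsK, ?_, ?_, ?_, ?_⟩
      · rw [hAeq]; exact Finset.singleton_nonempty a
      · exact Finset.Nonempty.mono Finset.subset_union_left hJne
      · rw [hAeq]; exact htri a
      · rw [hAeq]
        rw [Finset.disjoint_singleton_left, Finset.mem_union]
        push_neg
        exact ⟨Finset.disjoint_left.1 hIJ ha, haS⟩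
      · rw [hAeq]
        rw [Finset.disjoint_singleton_left]
        exact Finset.disjoint_left.1 hIK ha
      · exact Finset.disjoint_union_left.2 ⟨hJK, hIK.mono_left Finset.sdiff_subset⟩
      · ext x
        simp only [Finset.mem_union, Finset.mem_sdiff, Finset.mem_singleton,
          Finset.mem_univ, iff_true]
        have hx : x ∈ V.1 ∪ V.2.1 ∪ V.2.2 := hU ▸ mem_univ x
        simp only [Finset.mem_union] at hx
        by_cases hxa : x = a <;> tauto
    have hb' : b ∈ (V.1 \ (V.1 \ {a}), V.2.1 ∪ (V.1 \ {a}), V.2.2).2.1 :=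
      Finset.mem_union_left _ hb
    obtain ⟨p, hp, hpath⟩ := reach1 hn htri hpos hab hac hbc sab sac sbc hYvert hAeq hb' hc
    exact ⟨1 + p, by omega,
      gammaPath_trans (gammaPath_one hV hYvert hadj (cyclEq_refl _)) hpath⟩

end Anchors

/-- If `L` is generic, satisfies the triangle inequality, and
`s₂ + s₃ > (l₁ + ⋯ + lₙ)/2`, then any two vertices of `Γ(L)` lying in the same
connected component of `Γ(L)` are joined by a path of length at most 7. -/
theorem navigation_at_most_7_same_component (n : ℕ) (hn : 3 ≤ n) (L : Fin n → ℝ)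
    (hpos : ∀ i, 0 < L i) (hgen : GenericVec L) (htri : TriangleIneq L)
    (hs : (∑ i, L i) / 2 < s2 L + s3 L) :
    ∀ V W : LTriple n, IsVertex L V → IsVertex L W →
      (∃ m, GammaPath L m V W) → ∃ m ≤ 7, GammaPath L m V W := by
  intro V W hV hW hconn
  obtain ⟨m0, hpath0⟩ := hconn
  obtain ⟨a, b, c, hab, hac, hbc, sab, sac, sbc⟩ := exists_three_anchors hn L hs
  obtain ⟨V₁, hVc, haV⟩ := rotate_to_first hV a (mem_parts hV a)
  have hV₁ : IsVertex L V₁ := isVertex_cyclEq hVc hV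
  obtain ⟨W₁, hWc, haW⟩ := rotate_to_first hW a (mem_parts hW a)
  have hW₁ : IsVertex L W₁ := isVertex_cyclEq hWc hW
  have hOr : OrPos a b V ↔ OrPos a b W :=
    orPos_path hpos hab hac hbc sab sac sbc hpath0
  have hbV : b ∈ V₁.2.1 ∨ b ∈ V₁.2.2 := by
    rcases mem_parts hV₁ b with h | h | h
    · exact (my_noshare hpos hab sab hV₁.2.2.2.1 haV h).elim
    · exact Or.inl h
    · exact Or.inr h
  have hcV : c ∈ V₁.2.1 ∨ c ∈ V₁.2.2 := by
    rcases mem_parts hV₁ c with h | h | h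
    · exact (my_noshare hpos hac sac hV₁.2.2.2.1 haV h).elim
    · exact Or.inl h
    · exact Or.inr h
  have hbW : b ∈ W₁.2.1 ∨ b ∈ W₁.2.2 := by
    rcases mem_parts hW₁ b with h | h | h
    · exact (my_noshare hpos hab sab hW₁.2.2.2.1 haW h).elim
    · exact Or.inl h
    · exact Or.inr h
  have hcW : c ∈ W₁.2.1 ∨ c ∈ W₁.2.2 := by
    rcases mem_parts hW₁ c with h | h | h
    · exact (my_noshare hpos hac sac hW₁.2.2.2.1 haW h).elim
    · exact Or.inl h
    · exact Or.inr h
  rcases hbV with hb1 | hb1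
  · have hc1 : c ∈ V₁.2.2 := by
      rcases hcV with h | h
      · exact (my_noshare hpos hbc sbc hV₁.2.2.2.2.1 hb1 h).elim
      · exact h
    have hOrV : OrPos a b V := (orPos_cyclEq hVc).1 (Or.inl ⟨haV, hb1⟩)
    have hOrW₁ : OrPos a b W₁ := (orPos_cyclEq hWc).2 (hOr.1 hOrV)
    have hbW1 : b ∈ W₁.2.1 := by
      rcases hbW with h | h
      · exact h
      · exact (not_orPos hW₁ haW h hOrW₁).elim
    have hcW1 : c ∈ W₁.2.2 := by
      rcases hcW with h | h
      · exact (my_noshare hpos hbc sbc hW₁.2.2.2.2.1 hbW1 h).elim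
      · exact h
    obtain ⟨p, hp, hP⟩ := reach2 hn htri hpos hab hac hbc sab sac sbc hV₁ haV hb1 hc1
    obtain ⟨q, hq, hQ⟩ := reach2 hn htri hpos hab hac hbc sab sac sbc hW₁ haW hbW1 hcW1
    exact ⟨p + q, by omega, gammaPath_trans (gammaPath_congr_left hVc hP)
      (gammaPath_symm (gammaPath_congr_left hWc hQ))⟩
  · have hc1 : c ∈ V₁.2.1 := by
      rcases hcV with h | h
      · exact h
      · exact (my_noshare hpos hbc sbc hV₁.2.2.2.2.2.1 hb1 h).elim
    have hnOrV : ¬ OrPos a b V := fun hO => not_orPos hV₁ haV hb1 ((orPos_cyclEq hVc).2 hO)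
    have hnOrW₁ : ¬ OrPos a b W₁ := fun hO => hnOrV (hOr.2 ((orPos_cyclEq hWc).1 hO))
    have hbW1 : b ∈ W₁.2.2 := by
      rcases hbW with h | h
      · exact (hnOrW₁ (Or.inl ⟨haW, h⟩)).elim
      · exact h
    have hcW1 : c ∈ W₁.2.1 := by
      rcases hcW with h | h
      · exact h
      · exact (my_noshare hpos hbc sbc hW₁.2.2.2.2.2.1 hbW1 h).elim
    have sbc' : (∑ i, L i) / 2 < L c + L b := by linarith
    obtain ⟨p, hp, hP⟩ := reach2 hn htri hpos hac hab (Ne.symm hbc) sac sab sbc'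
      hV₁ haV hc1 hb1
    obtain ⟨q, hq, hQ⟩ := reach2 hn htri hpos hac hab (Ne.symm hbc) sac sab sbc'
      hW₁ haW hcW1 hbW1
    exact ⟨p + q, by omega, gammaPath_trans (gammaPath_congr_left hVc hP)
      (gammaPath_symm (gammaPath_congr_left hWc hQ))⟩
end
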